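/- Assume Re(ν) > 0 and let ψ: (0,∞) → V be continuous and satisfy the Lewis equation at every x > 0. Define Q_0(x) = x^{−2ν−1}·ψ(1/x) − Σ_{n=0}^∞ (n+x)^{−2ν−1}·η(T(T')^n)^{−1}(ψ(1 + 1/(n+x))) for x > 0 (the series converges absolutely since Re(2ν+1) > 1 and ψ is bounded on [1,2]). Then Q_0(x+1) = η(T')·Q_0(x) for all x > 0. -/

import Mathlib

open Complex

/-- `SL₂(ℤ)`. -/
abbrev SL2Z := Matrix.SpecialLinearGroup (Fin 2) ℤ

/-- The matrix `T = [[1,1],[0,1]]`. -/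
def Tm : SL2Z := ⟨!![1, 1; 0, 1], by norm_num [Matrix.det_fin_two_of]⟩

/-- The matrix `S = [[0,1],[−1,0]]`. -/
def Sm : SL2Z := ⟨!![0, 1; -1, 0], by norm_num [Matrix.det_fin_two_of]⟩

/-- The matrix `T' = [[1,0],[1,1]]`. -/
def Tm' : SL2Z := ⟨!![1, 0; 1, 1], by norm_num [Matrix.det_fin_two_of]⟩

/-- The matrix `−I`. -/
def negI : SL2Z := ⟨!![-1, 0; 0, -1], by norm_num [Matrix.det_fin_two_of]⟩

/-- `ψ : (0,∞) → V` satisfies the Lewis equation with parameter `ν` at `x`. -/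
def LewisEqR {V : Type*} [NormedAddCommGroup V] [NormedSpace ℂ V]
    (η : SL2Z →* Module.End ℂ V) (ν : ℂ) (ψ : ℝ → V) (x : ℝ) : Prop :=
  η Tm (ψ x) =
    ψ (x + 1) +
      ((((x : ℂ) + 1)) ^ (-2 * ν - 1)) • η (Sm * Tm⁻¹) (ψ (x / (x + 1)))

lemma aux_conj : Tm' = Sm * Tm⁻¹ * Sm⁻¹ := by
  rw [Matrix.SpecialLinearGroup.SL2_inv_expl, Matrix.SpecialLinearGroup.SL2_inv_expl]
  ext i j
  fin_cases i <;> fin_cases j <;>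
    rfl

lemma aux_one : Tm' * Tm⁻¹ * (Sm * Tm⁻¹) = 1 := by
  rw [Matrix.SpecialLinearGroup.SL2_inv_expl]
  ext i j
  fin_cases i <;> fin_cases j <;>
    rfl

/-- If `Re(ν) > 0` and `ψ` is continuous on `(0,∞)` and satisfies the Lewis
equation there, then
`Q₀(x) = x^{−2ν−1}ψ(1/x) − Σ_{n≥0} (n+x)^{−2ν−1} η(T(T')ⁿ)⁻¹ ψ(1+1/(n+x))`
(an absolutely convergent series) satisfies `Q₀(x+1) = η(T')·Q₀(x)` for `x > 0`. -/
theorem stmt11 {V : Type*} [NormedAddCommGroup V] [NormedSpace ℂ V]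
    [FiniteDimensional ℂ V] [Nontrivial V]
    (η : SL2Z →* Module.End ℂ V) (hη : η negI = 1)
    (N : ℕ) (hN : 0 < N) (hord : η Tm ^ N = 1)
    (ν : ℂ) (hν : 0 < ν.re)
    (ψ : ℝ → V) (hψcont : ContinuousOn ψ (Set.Ioi (0 : ℝ)))
    (hψlewis : ∀ x : ℝ, 0 < x → LewisEqR η ν ψ x)
    (Q0 : ℝ → V)
    (hQ0 : ∀ x : ℝ, 0 < x →
      Q0 x = (((x : ℂ)) ^ (-2 * ν - 1)) • ψ (1 / x) -
        ∑' n : ℕ, (((((n : ℝ) + x : ℝ) : ℂ)) ^ (-2 * ν - 1)) •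
          η ((Tm * Tm' ^ n)⁻¹) (ψ (1 + 1 / ((n : ℝ) + x)))) :
    (∀ x : ℝ, 0 < x →
      Summable (fun n : ℕ => ‖(((((n : ℝ) + x : ℝ) : ℂ)) ^ (-2 * ν - 1)) •
        η ((Tm * Tm' ^ n)⁻¹) (ψ (1 + 1 / ((n : ℝ) + x)))‖)) ∧
    ∀ x : ℝ, 0 < x → Q0 (x + 1) = η Tm' (Q0 x) := by
  set s : ℂ := -2 * ν - 1 with hs
  have hsre : s.re < -1 := by
    have : s.re = -2 * ν.re - 1 := by
      simp [hs, Complex.sub_re, Complex.mul_re]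
    rw [this]; linarith
  -- units version of η
  set ηu : SL2Z →* (Module.End ℂ V)ˣ := η.toHomUnits with hηudef
  have hcoe : ∀ g : SL2Z, ((ηu g : Module.End ℂ V)) = η g := fun g =>
    η.coe_toHomUnits g
  have hordu : ηu Tm ^ N = 1 := by
    ext
    simp [Units.val_pow_eq_pow_val, hcoe, hord]
  have hT'u : ηu Tm' ^ N = 1 := by
    have h1 : ηu Tm' = ηu Sm * (ηu Tm)⁻¹ * (ηu Sm)⁻¹ := by
      rw [aux_conj]; simp [map_mul, map_inv]
    rw [h1, conj_pow, inv_pow, hordu, inv_one, mul_one, mul_inv_cancel]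
  have hper : ∀ n : ℕ, η ((Tm * Tm' ^ n)⁻¹) = η ((Tm * Tm' ^ (n % N))⁻¹) := by
    intro n
    have : ηu ((Tm * Tm' ^ n)⁻¹) = ηu ((Tm * Tm' ^ (n % N))⁻¹) := by
      simp only [map_inv, map_mul, map_pow]
      rw [pow_eq_pow_mod n hT'u]
    rw [← hcoe, ← hcoe, this]
  -- uniform operator bound
  set L : ℕ → (V →L[ℂ] V) :=
    fun k => LinearMap.toContinuousLinearMap (η ((Tm * Tm' ^ k)⁻¹)) with hL
  set C : ℝ := ∑ k ∈ Finset.range N, ‖L k‖ with hC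
  have hC0 : 0 ≤ C := Finset.sum_nonneg fun k _ => norm_nonneg _
  have hop : ∀ (n : ℕ) (v : V), ‖η ((Tm * Tm' ^ n)⁻¹) v‖ ≤ C * ‖v‖ := by
    intro n v
    rw [hper n]
    have h1 : ‖L (n % N) v‖ ≤ ‖L (n % N)‖ * ‖v‖ := (L (n % N)).le_opNorm v
    have h2 : ‖L (n % N)‖ ≤ C := by
      exact Finset.single_le_sum (f := fun k => ‖L k‖)
        (fun k _ => norm_nonneg _) (Finset.mem_range.mpr (Nat.mod_lt n hN))
    have h3 : (L (n % N)) v = η ((Tm * Tm' ^ (n % N))⁻¹) v := rfl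
    rw [← h3]
    exact h1.trans (mul_le_mul_of_nonneg_right h2 (norm_nonneg v))
  -- summability
  have hSummN : ∀ x : ℝ, 0 < x →
      Summable (fun n : ℕ => ‖(((((n : ℝ) + x : ℝ) : ℂ)) ^ s) •
        η ((Tm * Tm' ^ n)⁻¹) (ψ (1 + 1 / ((n : ℝ) + x)))‖) := by
    intro x hx
    obtain ⟨M, hM⟩ := (isCompact_Icc (a := (1:ℝ)) (b := 1 + 1/x)).exists_bound_of_continuousOn
      (hψcont.mono (fun y hy => lt_of_lt_of_le one_pos hy.1))
    have hmem : ∀ n : ℕ, (1 + 1 / ((n : ℝ) + x)) ∈ Set.Icc (1:ℝ) (1 + 1/x) := by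
      intro n
      have hnx : 0 < (n : ℝ) + x := by positivity
      constructor
      · nlinarith [one_div_pos.mpr hnx]
      · have : 1 / ((n : ℝ) + x) ≤ 1 / x :=
          one_div_le_one_div_of_le hx (by linarith [Nat.cast_nonneg (α := ℝ) n])
        linarith
    have hbase : Summable (fun n : ℕ => ((n : ℝ) + x) ^ s.re) := by
      have h := (Real.summable_one_div_nat_add_rpow x (-s.re)).mpr (by linarith)
      refine h.congr fun n => ?_
      have hnx : 0 < (n : ℝ) + x := by positivity
      rw [abs_of_pos hnx, one_div, ← Real.rpow_neg hnx.le, neg_neg]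
    refine Summable.of_nonneg_of_le (fun n => norm_nonneg _) (fun n => ?_)
      ((hbase.mul_left (C * M)))
    have hnx : 0 < (n : ℝ) + x := by positivity
    rw [norm_smul]
    have h1 : ‖((((n : ℝ) + x : ℝ) : ℂ)) ^ s‖ = ((n : ℝ) + x) ^ s.re := by
      rw [Complex.norm_cpow_eq_rpow_re_of_pos hnx]
    rw [h1]
    have h2 : ‖η ((Tm * Tm' ^ n)⁻¹) (ψ (1 + 1 / ((n : ℝ) + x)))‖ ≤ C * M := by
      refine (hop n _).trans ?_
      exact mul_le_mul_of_nonneg_left (hM _ (hmem n)) hC0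
    calc ((n : ℝ) + x) ^ s.re * ‖η ((Tm * Tm' ^ n)⁻¹) (ψ (1 + 1 / ((n : ℝ) + x)))‖
        ≤ ((n : ℝ) + x) ^ s.re * (C * M) :=
          mul_le_mul_of_nonneg_left h2 (Real.rpow_nonneg hnx.le _)
      _ = C * M * ((n : ℝ) + x) ^ s.re := by ring
  refine ⟨hSummN, ?_⟩
  -- the functional equation
  intro x hx
  have hx1 : (0:ℝ) < x + 1 := by linarith
  set f : ℕ → ℝ → V := fun n y => (((((n : ℝ) + y : ℝ) : ℂ)) ^ s) •
    η ((Tm * Tm' ^ n)⁻¹) (ψ (1 + 1 / ((n : ℝ) + y))) with hf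
  have hSum : ∀ y : ℝ, 0 < y → Summable (fun n => f n y) := fun y hy =>
    (hSummN y hy).of_norm
  -- key identity from the Lewis equation at 1/x
  have hxinv : (0:ℝ) < 1 / x := by positivity
  have lewis := hψlewis (1 / x) hxinv
  rw [LewisEqR] at lewis
  have key : ((x:ℂ)) ^ s • η Tm' (ψ (1 / x)) =
      ((x:ℂ)) ^ s • η (Tm' * Tm⁻¹) (ψ (1 + 1 / x)) +
        (((x + 1 : ℝ) : ℂ)) ^ s • ψ (1 / (x + 1)) := by
    have happ := congrArg (η (Tm' * Tm⁻¹)) lewis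
    rw [map_add, map_smul] at happ
    have e1 : η (Tm' * Tm⁻¹) (η Tm (ψ (1 / x))) = η Tm' (ψ (1 / x)) := by
      rw [← Module.End.mul_apply, ← map_mul]
      congr 1
      rw [mul_assoc, inv_mul_cancel, mul_one]
    have e2 : ∀ v : V, η (Tm' * Tm⁻¹) (η (Sm * Tm⁻¹) v) = v := by
      intro v
      rw [← Module.End.mul_apply, ← map_mul, aux_one, map_one, Module.End.one_apply]
    rw [e1, e2] at happ
    have e3 : (1 / x) / (1 / x + 1) = 1 / (x + 1) := by
      field_simp
      ring
    have e4 : (1 / x : ℝ) + 1 = 1 + 1 / x := by ring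
    rw [e3, e4] at happ
    -- happ : η Tm' (ψ (1/x)) = η (Tm'*Tm⁻¹) (ψ (1+1/x)) + ((↑(1/x)+1)^s) • ψ (1/(x+1))
    have := congrArg (fun v => ((x:ℂ)) ^ s • v) happ
    simp only [smul_add, smul_smul] at this
    rw [this]
    congr 1
    congr 1
    have hxc : (x:ℂ) ≠ 0 := Complex.ofReal_ne_zero.mpr hx.ne'
    have hb : ((1 / x : ℝ) : ℂ) + 1 = (((x + 1) / x : ℝ) : ℂ) := by
      push_cast
      field_simp
      ring
    have hr : x * ((x + 1) / x) = x + 1 := by field_simp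
    rw [hb, ← hs,
      ← Complex.mul_cpow_ofReal_nonneg hx.le (by positivity : (0:ℝ) ≤ (x+1)/x),
      ← Complex.ofReal_mul, hr]
  -- shift identity for matrices
  have hmshift : ∀ n : ℕ, Tm' * (Tm * Tm' ^ (n + 1))⁻¹ = (Tm * Tm' ^ n)⁻¹ := by
    intro n
    rw [pow_succ]
    group
  have hshift : ∀ n : ℕ, η Tm' (f (n + 1) x) = f n (x + 1) := by
    intro n
    simp only [hf]
    rw [map_smul, ← Module.End.mul_apply, ← map_mul, hmshift n]
    have e1 : ((n + 1 : ℕ) : ℝ) + x = (n : ℝ) + (x + 1) := by push_cast; ring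
    rw [e1]
  -- apply η Tm' to Q0 x
  have hQx := hQ0 x hx
  have hQx1 := hQ0 (x + 1) hx1
  rw [hQx, hQx1]
  rw [map_sub, map_smul]
  have htsum : η Tm' (∑' n : ℕ, f n x) = ∑' n : ℕ, η Tm' (f n x) := by
    exact (LinearMap.toContinuousLinearMap (η Tm')).map_tsum (hSum x hx)
  rw [show (∑' n : ℕ, (((((n : ℝ) + x : ℝ) : ℂ)) ^ s) •
      η ((Tm * Tm' ^ n)⁻¹) (ψ (1 + 1 / ((n : ℝ) + x)))) = ∑' n, f n x from rfl]
  rw [htsum]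
  have hsumTη : Summable (fun n => η Tm' (f n x)) := by
    exact (LinearMap.toContinuousLinearMap (η Tm')).summable (hSum x hx)
  rw [hsumTη.tsum_eq_zero_add]
  have hzero : η Tm' (f 0 x) = ((x:ℂ)) ^ s • η (Tm' * Tm⁻¹) (ψ (1 + 1 / x)) := by
    simp only [hf, Nat.cast_zero, zero_add, pow_zero, mul_one]
    rw [map_smul, ← Module.End.mul_apply, ← map_mul]
  rw [hzero]
  rw [tsum_congr hshift]
  rw [show (∑' n : ℕ, (((((n : ℝ) + (x + 1) : ℝ) : ℂ)) ^ s) •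
      η ((Tm * Tm' ^ n)⁻¹) (ψ (1 + 1 / ((n : ℝ) + (x + 1))))) = ∑' n, f n (x + 1) from rfl]
  rw [key]
  abel
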